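/- The signless Laplacian spectral radius of the graph $K_2 \vee 10K_1$ equals $7 + 3\sqrt{5}$, and $K_2 \vee 10K_1$ contains no spanning tree with leaf degree at most $4$. -/

import Mathlib

/-- The signless Laplacian matrix `Q(G) = D(G) + A(G)` of a simple graph, over `ℝ`. -/
noncomputable def signlessLap {V : Type*} [Fintype V] [DecidableEq V] (G : SimpleGraph V) :
    Matrix V V ℝ :=
  letI : DecidableRel G.Adj := Classical.decRel _
  G.degMatrix ℝ + G.adjMatrix ℝ

/-- The signless Laplacian spectral radius `q(G)`: the largest eigenvalue of `Q(G)`. -/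
noncomputable def qRadius {V : Type*} [Fintype V] [DecidableEq V] (G : SimpleGraph V) : ℝ :=
  sSup (spectrum ℝ (signlessLap G))

/-- `G` has a spanning tree whose leaf degree is at most `k`, i.e. a spanning tree `T`
in which every vertex is adjacent (in `T`) to at most `k` leaves of `T`. -/
def HasSpanningTreeWithLeafDegLE {V : Type*} (G : SimpleGraph V) (k : ℕ) : Prop :=
  ∃ T : SimpleGraph V, T ≤ G ∧ T.IsTree ∧
    ∀ v : V, {u : V | T.Adj v u ∧ (T.neighborSet u).ncard = 1}.ncard ≤ k

/-- The join `G ∨ H` of two vertex-disjoint graphs: all edges between the two parts. -/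
def SimpleGraph.graphJoin {α β : Type*} (G : SimpleGraph α) (H : SimpleGraph β) :
    SimpleGraph (α ⊕ β) where
  Adj x y :=
    match x, y with
    | Sum.inl a, Sum.inl b => G.Adj a b
    | Sum.inr a, Sum.inr b => H.Adj a b
    | Sum.inl _, Sum.inr _ => True
    | Sum.inr _, Sum.inl _ => True
  symm := by constructor; rintro (a | a) (b | b) h <;> first | trivial | exact G.symm.symm _ _ h | exact H.symm.symm _ _ h
  loopless := by constructor; rintro (a | a) h <;> first | exact G.loopless.irrefl _ h | exact H.loopless.irrefl _ h

/-- The disjoint union `G ∪ H` of two vertex-disjoint graphs. -/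
def SimpleGraph.graphDisjUnion {α β : Type*} (G : SimpleGraph α) (H : SimpleGraph β) :
    SimpleGraph (α ⊕ β) where
  Adj x y :=
    match x, y with
    | Sum.inl a, Sum.inl b => G.Adj a b
    | Sum.inr a, Sum.inr b => H.Adj a b
    | _, _ => False
  symm := by constructor; rintro (a | a) (b | b) h <;> first | trivial | exact G.symm.symm _ _ h | exact H.symm.symm _ _ h
  loopless := by constructor; rintro (a | a) h <;> first | exact G.loopless.irrefl _ h | exact H.loopless.irrefl _ h

/- ### Auxiliary material -/

theorem mem_spectrum_iff_eig {n : Type*} [Fintype n] [DecidableEq n] (M : Matrix n n ℝ) (μ : ℝ) :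
    μ ∈ spectrum ℝ M ↔ ∃ v ≠ 0, M.mulVec v = μ • v := by
  rw [spectrum.mem_iff, Matrix.isUnit_iff_isUnit_det, isUnit_iff_ne_zero, not_ne_iff,
    ← Matrix.exists_mulVec_eq_zero_iff]
  have key : ∀ v : n → ℝ, (algebraMap ℝ (Matrix n n ℝ) μ - M).mulVec v = μ • v - M.mulVec v := by
    intro v
    rw [Matrix.sub_mulVec, Matrix.algebraMap_eq_diagonal]
    ext i
    simp [Matrix.mulVec_diagonal, mul_comm]
  constructor
  · rintro ⟨v, hv, h⟩
    rw [key] at h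
    exact ⟨v, hv, (sub_eq_zero.mp h).symm⟩
  · rintro ⟨v, hv, h⟩
    exact ⟨v, hv, by rw [key, h, sub_self]⟩

private abbrev GG : SimpleGraph (Fin 2 ⊕ Fin 10) :=
  (⊤ : SimpleGraph (Fin 2)).graphJoin (⊥ : SimpleGraph (Fin 10))

private lemma GG_adj_ll (a b : Fin 2) : GG.Adj (.inl a) (.inl b) ↔ a ≠ b := Iff.rfl
private lemma GG_adj_lr (a : Fin 2) (j : Fin 10) : GG.Adj (.inl a) (.inr j) := trivial
private lemma GG_adj_rl (i : Fin 10) (b : Fin 2) : GG.Adj (.inr i) (.inl b) := trivial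
private lemma GG_adj_rr (i j : Fin 10) : ¬ GG.Adj (.inr i) (.inr j) := fun h => h

private lemma nbhd_inl (a : Fin 2) :
    GG.neighborSet (.inl a)
      = ↑({Sum.inl (a+1)} ∪ Finset.univ.image Sum.inr : Finset (Fin 2 ⊕ Fin 10)) := by
  ext x
  cases x with
  | inl b =>
    simp [SimpleGraph.mem_neighborSet, GG_adj_ll]
    revert a b; decide
  | inr j => simp [SimpleGraph.mem_neighborSet, GG_adj_lr]

private lemma nbhd_inr (i : Fin 10) :
    GG.neighborSet (.inr i) = ↑({Sum.inl 0, Sum.inl 1} : Finset (Fin 2 ⊕ Fin 10)) := by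
  ext x
  cases x with
  | inl b =>
    simp [SimpleGraph.mem_neighborSet, GG_adj_rl]
    revert b; decide
  | inr j => simp [SimpleGraph.mem_neighborSet]; exact GG_adj_rr i j

private lemma deg_inl (a : Fin 2) [Fintype (GG.neighborSet (Sum.inl a))] :
    GG.degree (.inl a) = 11 := by
  rw [← SimpleGraph.card_neighborSet_eq_degree, ← Nat.card_eq_fintype_card, nbhd_inl,
    Nat.card_coe_set_eq, Set.ncard_coe_finset]
  fin_cases a <;> decide

private lemma deg_inr (i : Fin 10) [Fintype (GG.neighborSet (Sum.inr i))] :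
    GG.degree (.inr i) = 2 := by
  rw [← SimpleGraph.card_neighborSet_eq_degree, ← Nat.card_eq_fintype_card, nbhd_inr,
    Nat.card_coe_set_eq, Set.ncard_coe_finset]
  decide

private def Mexp : Matrix (Fin 2 ⊕ Fin 10) (Fin 2 ⊕ Fin 10) ℝ := fun x y =>
  match x, y with
  | .inl a, .inl b => if a = b then 11 else 1
  | .inl _, .inr _ => 1
  | .inr _, .inl _ => 1
  | .inr i, .inr j => if i = j then 2 else 0

private lemma signlessLap_GG : signlessLap GG = Mexp := by
  letI : DecidableRel GG.Adj := Classical.decRel _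
  ext x y
  show (GG.degMatrix ℝ + GG.adjMatrix ℝ) x y = Mexp x y
  rw [Matrix.add_apply, SimpleGraph.degMatrix, Matrix.diagonal_apply, SimpleGraph.adjMatrix_apply]
  cases x with
  | inl a => cases y with
    | inl b =>
      rcases eq_or_ne a b with h | h
      · subst h; simp [Mexp, deg_inl, GG_adj_ll]
      · simp [Mexp, h, GG_adj_ll, (GG_adj_ll a b).mpr h]
    | inr j => simp [Mexp, GG_adj_lr]
  | inr i => cases y with
    | inl b => simp [Mexp, GG_adj_rl]
    | inr j =>
      rcases eq_or_ne i j with h | h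
      · subst h; simp [Mexp, deg_inr, GG_adj_rr i i]
      · simp [Mexp, h, GG_adj_rr i j]

private lemma mulVec_inl (v : Fin 2 ⊕ Fin 10 → ℝ) (a : Fin 2) :
    (Mexp.mulVec v) (.inl a)
      = 10 * v (.inl a) + (v (.inl 0) + v (.inl 1)) + ∑ j : Fin 10, v (.inr j) := by
  show ∑ y, Mexp (.inl a) y * v y = _
  rw [Fintype.sum_sum_type]
  have h2 : ∑ b : Fin 2, Mexp (.inl a) (.inl b) * v (.inl b)
      = 10 * v (.inl a) + (v (.inl 0) + v (.inl 1)) := by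
    rw [Fin.sum_univ_two]
    fin_cases a <;> simp [Mexp] <;> ring
  rw [h2]
  congr 1
  apply Finset.sum_congr rfl
  intro j _
  simp [Mexp]

private lemma mulVec_inr (v : Fin 2 ⊕ Fin 10 → ℝ) (i : Fin 10) :
    (Mexp.mulVec v) (.inr i) = v (.inl 0) + v (.inl 1) + 2 * v (.inr i) := by
  show ∑ y, Mexp (.inr i) y * v y = _
  rw [Fintype.sum_sum_type]
  have h2 : ∑ b : Fin 2, Mexp (.inr i) (.inl b) * v (.inl b) = v (.inl 0) + v (.inl 1) := by
    rw [Fin.sum_univ_two]; simp [Mexp]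
  have h10 : ∑ j : Fin 10, Mexp (.inr i) (.inr j) * v (.inr j) = 2 * v (.inr i) := by
    have : ∀ j : Fin 10, Mexp (.inr i) (.inr j) * v (.inr j)
        = if i = j then 2 * v (.inr j) else 0 := by
      intro j; by_cases h : i = j <;> simp [Mexp, h]
    rw [Finset.sum_congr rfl fun j _ => this j, Finset.sum_ite_eq]
    simp
  rw [h2, h10]

private lemma sqrt5_sq : Real.sqrt 5 ^ 2 = 5 := Real.sq_sqrt (by norm_num)

private lemma sqrt5_ge_two : (2 : ℝ) ≤ Real.sqrt 5 := by
  nlinarith [sqrt5_sq, Real.sqrt_nonneg 5]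

private lemma spectrum_ub : ∀ μ ∈ spectrum ℝ (signlessLap GG), μ ≤ 7 + 3 * Real.sqrt 5 := by
  intro μ hμ
  rw [signlessLap_GG, mem_spectrum_iff_eig] at hμ
  obtain ⟨v, hv, heig⟩ := hμ
  by_contra hgt
  push_neg at hgt
  have s5 := sqrt5_sq
  have s5n := Real.sqrt_nonneg 5
  have h10 : (10 : ℝ) < μ := by nlinarith [sqrt5_ge_two]
  have h2 : (2 : ℝ) < μ := by linarith
  set x0 := v (.inl 0) with hx0
  set x1 := v (.inl 1) with hx1
  set S := ∑ j : Fin 10, v (.inr j) with hS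
  have e0 : 10 * x0 + (x0 + x1) + S = μ * x0 := by
    have := congrFun heig (Sum.inl 0)
    rwa [mulVec_inl, Pi.smul_apply, smul_eq_mul] at this
  have e1 : 10 * x1 + (x0 + x1) + S = μ * x1 := by
    have := congrFun heig (Sum.inl 1)
    rwa [mulVec_inl, Pi.smul_apply, smul_eq_mul] at this
  have ei : ∀ i : Fin 10, x0 + x1 + 2 * v (.inr i) = μ * v (.inr i) := by
    intro i
    have := congrFun heig (Sum.inr i)
    rwa [mulVec_inr, Pi.smul_apply, smul_eq_mul] at this
  -- x0 = x1
  have hd : x0 = x1 := by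
    have : 10 * (x0 - x1) = μ * (x0 - x1) := by linarith
    by_contra hne
    have := mul_right_cancel₀ (sub_ne_zero.mpr hne) this
    linarith
  -- each w i = (x0+x1)/(μ-2)
  have hw : ∀ i : Fin 10, v (.inr i) = (x0 + x1) / (μ - 2) := by
    intro i
    have h := ei i
    have hμ2 : μ - 2 ≠ 0 := by linarith
    field_simp
    linarith
  have hSval : S = 10 * ((x0 + x1) / (μ - 2)) := by
    rw [hS]
    rw [Finset.sum_congr rfl fun i _ => hw i]
    rw [Finset.sum_const]
    push_cast [nsmul_eq_mul, Finset.card_univ, Fintype.card_fin]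
    ring
  -- quadratic
  have hsum : 12 * (x0 + x1) + 2 * S = μ * (x0 + x1) := by linarith
  have hquad : (x0 + x1) * (μ * μ - 14 * μ + 4) = 0 := by
    rw [hSval] at hsum
    have hμ2 : μ - 2 ≠ 0 := by linarith
    field_simp at hsum
    nlinarith [hsum]
  have hpos : μ * μ - 14 * μ + 4 > 0 := by nlinarith
  have hs0 : x0 + x1 = 0 := by
    rcases mul_eq_zero.mp hquad with h | h
    · exact h
    · linarith
  have hx0z : x0 = 0 := by rw [hd] at hs0 ⊢; linarith
  have hx1z : x1 = 0 := by linarith [hd]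
  apply hv
  funext x
  cases x with
  | inl a => fin_cases a <;> simp_all
  | inr i =>
    have := hw i
    rw [hs0] at this
    simpa using this

private lemma spectrum_mem : (7 + 3 * Real.sqrt 5) ∈ spectrum ℝ (signlessLap GG) := by
  rw [signlessLap_GG, mem_spectrum_iff_eig]
  refine ⟨Sum.elim (fun _ => 5 + 3 * Real.sqrt 5) (fun _ => 2), ?_, ?_⟩
  · intro h
    have := congrFun h (Sum.inr 0)
    simpa using this
  · have s5 := sqrt5_sq
    funext x
    cases x with
    | inl a =>
      rw [mulVec_inl, Pi.smul_apply]
      simp only [Sum.elim_inl, Sum.elim_inr, smul_eq_mul, Finset.sum_const, Finset.card_univ,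
        Fintype.card_fin, nsmul_eq_mul]
      push_cast
      nlinarith [s5]
    | inr i =>
      rw [mulVec_inr, Pi.smul_apply]
      simp only [Sum.elim_inl, Sum.elim_inr, smul_eq_mul]
      nlinarith [s5]

/- ### Part 2 : no spanning tree with leaf degree ≤ 4 -/

private lemma no_tree : ¬ HasSpanningTreeWithLeafDegLE GG 4 := by
  classical
  rintro ⟨T, hTG, hTree, hleaf⟩
  set u0 : Fin 2 ⊕ Fin 10 := Sum.inl 0 with hu0
  set u1 : Fin 2 ⊕ Fin 10 := Sum.inl 1 with hu1
  have hu01 : u0 ≠ u1 := by simp [hu0, hu1]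
  -- neighborhoods of independent vertices
  have hsub : ∀ i : Fin 10, T.neighborSet (.inr i) ⊆ {u0, u1} := by
    intro i x hx
    have hadj : GG.Adj (.inr i) x := hTG hx
    cases x with
    | inl b =>
      fin_cases b
      · exact Or.inl rfl
      · exact Or.inr rfl
    | inr j => exact absurd hadj (GG_adj_rr i j)
  have hne : ∀ i : Fin 10, (T.neighborSet (.inr i)).Nonempty := by
    intro i
    obtain ⟨w⟩ := hTree.isConnected.preconnected (.inr i) u0
    have hnn : ¬ w.Nil := SimpleGraph.Walk.not_nil_of_ne (by simp [hu0])
    exact ⟨_, (w.firstDart hnn).adj⟩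
  -- at most one doubly-adjacent independent vertex
  have hdouble : ∀ i j : Fin 10, T.Adj u0 (.inr i) → T.Adj (.inr i) u1 →
      T.Adj u0 (.inr j) → T.Adj (.inr j) u1 → i = j := by
    intro i j hi0 hi1 hj0 hj1
    have hip : (SimpleGraph.Walk.cons hi0 (SimpleGraph.Walk.cons hi1 SimpleGraph.Walk.nil)).IsPath := by
      simp [SimpleGraph.Walk.isPath_def, hu0, hu1]
    have hjp : (SimpleGraph.Walk.cons hj0 (SimpleGraph.Walk.cons hj1 SimpleGraph.Walk.nil)).IsPath := by
      simp [SimpleGraph.Walk.isPath_def, hu0, hu1]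
    have := hTree.IsAcyclic.path_unique ⟨_, hip⟩ ⟨_, hjp⟩
    have hw := congrArg (fun p : T.Path u0 u1 => p.1.support) this
    simp [SimpleGraph.Walk.support_cons] at hw
    exact hw
  classical
  set L0 : Set (Fin 2 ⊕ Fin 10) := {u | T.Adj u0 u ∧ (T.neighborSet u).ncard = 1} with hL0
  set L1 : Set (Fin 2 ⊕ Fin 10) := {u | T.Adj u1 u ∧ (T.neighborSet u).ncard = 1} with hL1
  have hleafmem : ∀ i : Fin 10, (T.neighborSet (.inr i)).ncard = 1 →
      (Sum.inr i : Fin 2 ⊕ Fin 10) ∈ L0 ∪ L1 := by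
    intro i h1
    obtain ⟨u, hu⟩ := hne i
    rcases hsub i hu with h | h
    · left; exact ⟨by rw [← h]; exact hu.symm, h1⟩
    · right; exact ⟨by rw [← h]; exact hu.symm, h1⟩
  have hfull : ∀ i : Fin 10, (T.neighborSet (.inr i)).ncard ≠ 1 →
      T.Adj u0 (.inr i) ∧ T.Adj (.inr i) u1 := by
    intro i h1
    have hle : (T.neighborSet (.inr i)).ncard ≤ 2 := by
      have := Set.ncard_le_ncard (hsub i) (Set.toFinite _)
      rwa [Set.ncard_pair hu01] at this
    have hpos : 0 < (T.neighborSet (.inr i)).ncard :=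
      (Set.ncard_pos (Set.toFinite _)).mpr (hne i)
    have h2 : (T.neighborSet (.inr i)).ncard = 2 := by omega
    have heq : T.neighborSet (.inr i) = {u0, u1} := by
      apply Set.eq_of_subset_of_ncard_le (hsub i)
      rw [Set.ncard_pair hu01, h2]
    have h0 : u0 ∈ T.neighborSet (.inr i) := by rw [heq]; exact Or.inl rfl
    have h1' : u1 ∈ T.neighborSet (.inr i) := by rw [heq]; exact Or.inr rfl
    exact ⟨h0.symm, h1'⟩
  set S : Finset (Fin 10) :=
    Finset.univ.filter (fun i => (T.neighborSet (.inr i)).ncard = 1) with hSdef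
  have hScompl : Sᶜ.card ≤ 1 := by
    apply Finset.card_le_one.mpr
    intro a ha b hb
    simp only [hSdef, Finset.mem_compl, Finset.mem_filter, Finset.mem_univ, true_and] at ha hb
    obtain ⟨ha0, ha1⟩ := hfull a ha
    obtain ⟨hb0, hb1⟩ := hfull b hb
    exact hdouble a b ha0 ha1 hb0 hb1
  have hScard : 9 ≤ S.card := by
    have := Finset.card_compl S
    have hle : S.card ≤ 10 := le_trans (Finset.card_le_univ S) (by simp)
    simp [Fintype.card_fin] at this
    omega
  have himg : (S.image (Sum.inr : Fin 10 → Fin 2 ⊕ Fin 10)).card = S.card :=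
    Finset.card_image_of_injective _ Sum.inr_injective
  have hsubL : ↑(S.image (Sum.inr : Fin 10 → Fin 2 ⊕ Fin 10)) ⊆ L0 ∪ L1 := by
    intro x hx
    simp only [Finset.coe_image, Set.mem_image, Finset.mem_coe, hSdef, Finset.mem_filter] at hx
    obtain ⟨i, ⟨_, hi⟩, rfl⟩ := hx
    exact hleafmem i hi
  have hcount : 9 ≤ (L0 ∪ L1).ncard := by
    have h1 : (↑(S.image (Sum.inr : Fin 10 → Fin 2 ⊕ Fin 10)) : Set (Fin 2 ⊕ Fin 10)).ncard
        = S.card := by rw [Set.ncard_coe_finset, himg]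
    have h2 := Set.ncard_le_ncard hsubL (Set.toFinite (L0 ∪ L1))
    rw [h1] at h2
    omega
  have hub : (L0 ∪ L1).ncard ≤ 8 := by
    calc (L0 ∪ L1).ncard ≤ L0.ncard + L1.ncard :=
      Set.ncard_union_le L0 L1
    _ ≤ 4 + 4 := add_le_add (hleaf u0) (hleaf u1)
    _ = 8 := rfl
  omega

/-- `q(K₂ ∨ 10K₁) = 7 + 3 * Real.sqrt 5` and `K₂ ∨ 10K₁` has no spanning tree with leaf degree at
most 4. -/
theorem qRadius_K2_join_10K1 :
    qRadius ((⊤ : SimpleGraph (Fin 2)).graphJoin (⊥ : SimpleGraph (Fin 10))) = 7 + 3 * Real.sqrt 5 ∧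
      ¬ HasSpanningTreeWithLeafDegLE ((⊤ : SimpleGraph (Fin 2)).graphJoin (⊥ : SimpleGraph (Fin 10))) 4 := by
  constructor
  · apply le_antisymm
    · exact csSup_le ⟨_, spectrum_mem⟩ spectrum_ub
    · exact le_csSup ⟨_, fun x hx => spectrum_ub x hx⟩ spectrum_mem
  · exact no_tree
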